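/- Let M be an R-module whose Jacobson radical Jac(M) is small in M and which has finite dual Goldie dimension, over a commutative unital ring R. If S_M is nonempty, then σ(M,R) = min_{m ∈ S_M} |R/m| + 1. If S_M is empty and M is finitely generated, then M is cyclic. -/

import Mathlib

universe u

open Cardinal

/-- The covering number of a module: the least cardinal number of proper submodules whose
union is the whole module. -/
noncomputable def coveringNumber (R M : Type u) [Ring R] [AddCommGroup M] [Module R M] :
    Cardinal.{u} :=
  sInf {c : Cardinal.{u} | ∃ S : Set (Submodule R M),
    (∀ N ∈ S, N ≠ ⊤) ∧ (⋃ N ∈ S, (N : Set M)) = Set.univ ∧ #S = c}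

/-- The set of maximal ideals `m` of `R` with `dim_{R/m} (M/mM) ≥ 2`. -/
def SMax (R M : Type u) [CommRing R] [AddCommGroup M] [Module R M] :
    Set (MaximalSpectrum R) :=
  {m | 2 ≤ Module.rank (R ⧸ m.asIdeal) (M ⧸ (m.asIdeal • ⊤ : Submodule R M))}

/-- The Jacobson radical of a module: the intersection of all maximal (proper) submodules. -/
def moduleJacobson (R M : Type u) [Ring R] [AddCommGroup M] [Module R M] :
    Submodule R M :=
  sInf {N : Submodule R M | IsCoatom N}

/-- A submodule `N` of `M` is small (superfluous) if `N + K = M` implies `K = M`. -/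
def IsSmallSubmodule {R M : Type u} [Ring R] [AddCommGroup M] [Module R M]
    (N : Submodule R M) : Prop :=
  ∀ K : Submodule R M, N ⊔ K = ⊤ → K = ⊤


section AuxCover
open Submodule

theorem vs_pair {k V : Type u} [Field k] [AddCommGroup V] [Module k V]
    (S : Set (Submodule k V)) (hS : ∀ W ∈ S, W ≠ ⊤)
    (hcov : ∀ v : V, ∃ W ∈ S, v ∈ W) :
    ∃ a b : V, LinearIndependent k ![a, b] := by
  obtain ⟨W₀, hW₀S, _⟩ := hcov 0
  have hlt : W₀ < ⊤ := lt_top_iff_ne_top.mpr (hS _ hW₀S)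
  obtain ⟨a, -, haW₀⟩ := SetLike.exists_of_lt hlt
  have ha : a ≠ 0 := fun h => haW₀ (h ▸ W₀.zero_mem)
  by_cases hb : ∃ b : V, b ∉ Submodule.span k {a}
  · obtain ⟨b, hb⟩ := hb
    refine ⟨b, a, (linearIndependent_fin2).mpr ⟨by simpa using ha, fun c hc => hb ?_⟩⟩
    simp only [Matrix.cons_val_one, Matrix.head_cons, Matrix.cons_val_zero] at hc
    exact hc ▸ Submodule.smul_mem _ c (Submodule.mem_span_singleton_self a)
  · push_neg at hb
    obtain ⟨W₁, hW₁S, haW₁⟩ := hcov a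
    have : Submodule.span k {a} ≤ W₁ := Submodule.span_le.mpr (by simpa using haW₁)
    exact absurd (top_unique fun v _ => this (hb v)) (hS _ hW₁S)

theorem vs_card {k : Type u} [Field k] :
    ∀ (n : ℕ) {V : Type u} [AddCommGroup V] [Module k V] [FiniteDimensional k V],
      Module.finrank k V = n →
      ∀ S : Set (Submodule k V), (∀ W ∈ S, W ≠ ⊤) → (∀ v : V, ∃ W ∈ S, v ∈ W) →
      #k + 1 ≤ #S := by
  intro n
  induction n using Nat.strong_induction_on with
  | _ n ih =>
    intro V _ _ _ hrank S hS hcov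
    obtain ⟨W₀, hW₀S, _⟩ := hcov 0
    have hlt : W₀ < ⊤ := lt_top_iff_ne_top.mpr (hS _ hW₀S)
    obtain ⟨a, -, haW₀⟩ := SetLike.exists_of_lt hlt
    have ha : a ≠ 0 := fun h => haW₀ (h ▸ W₀.zero_mem)
    by_cases hsa : ∀ v : V, ∃ W ∈ S, a ∈ W ∧ v ∈ W
    · -- Case 1 : quotient by span a
      set p : Submodule k V := Submodule.span k {a} with hp
      have hap : a ∈ p := Submodule.mem_span_singleton_self a
      set S' : Set (Submodule k (V ⧸ p)) := (Submodule.map p.mkQ) '' {W ∈ S | a ∈ W} with hS'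
      have hS'prop : ∀ W' ∈ S', W' ≠ ⊤ := by
        rintro W' ⟨W, ⟨hWS, haW⟩, rfl⟩ htop
        rw [Submodule.map_mkQ_eq_top] at htop
        have : p ⊔ W = W := sup_eq_right.mpr (Submodule.span_le.mpr (by simpa using haW))
        exact hS _ hWS (by rw [this] at htop; exact htop)
      have hS'cov : ∀ v' : V ⧸ p, ∃ W' ∈ S', v' ∈ W' := by
        intro v'
        obtain ⟨v, rfl⟩ := p.mkQ_surjective v'
        obtain ⟨W, hWS, haW, hvW⟩ := hsa v
        exact ⟨Submodule.map p.mkQ W, ⟨W, ⟨hWS, haW⟩, rfl⟩, Submodule.mem_map_of_mem hvW⟩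
      have hrk : Module.finrank k (V ⧸ p) + 1 = n := by
        rw [← hrank, ← finrank_span_singleton (K := k) ha, ← hp]
        exact Submodule.finrank_quotient_add_finrank p
      have := ih (Module.finrank k (V ⧸ p)) (by omega) rfl S' hS'prop hS'cov
      refine this.trans ((mk_image_le).trans (mk_le_mk_of_subset ?_))
      exact fun W hW => hW.1
    · -- Case 2 : line argument
      push_neg at hsa
      obtain ⟨b, hb⟩ := hsa
      set P : Option k → V := fun o => Option.rec b (fun t => a + t • b) o with hP
      have hcov' : ∀ o : Option k, ∃ W ∈ S, P o ∈ W := fun o => hcov (P o)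
      choose g hg1 hg2 using hcov'
      have hginj : Function.Injective g := by
        intro o o' hoo'
        by_contra hne
        set W := g o with hW
        have hWS : W ∈ S := hg1 o
        have h1 : P o ∈ W := hg2 o
        have h2 : P o' ∈ W := hoo' ▸ hg2 o'
        -- derive a ∈ W and b ∈ W
        have hab : a ∈ W ∧ b ∈ W := by
          match o, o', hne with
          | none, none, hne => exact absurd rfl hne
          | none, some t, _ =>
            have hbW : b ∈ W := h1
            have h2' : a + t • b ∈ W := h2
            have haW : a ∈ W := by simpa using W.sub_mem h2' (W.smul_mem t hbW)
            exact ⟨haW, hbW⟩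
          | some t, none, _ =>
            have hbW : b ∈ W := h2
            have h1' : a + t • b ∈ W := h1
            have haW : a ∈ W := by simpa using W.sub_mem h1' (W.smul_mem t hbW)
            exact ⟨haW, hbW⟩
          | some t, some s, hne =>
            have hts : t ≠ s := fun h => hne (by rw [h])
            have h1' : a + t • b ∈ W := h1
            have h2' : a + s • b ∈ W := h2
            have h3 : (t - s) • b ∈ W := by
              have h := W.sub_mem h1' h2'
              rwa [show (a + t • b) - (a + s • b) = (t - s) • b from by
                rw [sub_smul]; abel] at h
            have hbW : b ∈ W := by
              have h := W.smul_mem (t - s)⁻¹ h3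
              rwa [smul_smul, inv_mul_cancel₀ (sub_ne_zero.mpr hts), one_smul] at h
            have haW : a ∈ W := by simpa using W.sub_mem h1' (W.smul_mem t hbW)
            exact ⟨haW, hbW⟩
        exact hb W hWS hab.1 hab.2
      calc #k + 1 = #(Option k) := (mk_option).symm
        _ ≤ #S := mk_le_of_injective (f := fun o => (⟨g o, hg1 o⟩ : S))
            (fun o o' h => hginj (congrArg Subtype.val h))

section
attribute [local instance] Ideal.Quotient.field

variable {R N M : Type u} [CommRing R] [AddCommGroup N] [Module R N]
  [AddCommGroup M] [Module R M]

theorem coatom_ann_isMaximal {P : Submodule R N} (hP : IsCoatom P) :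
    (Module.annihilator R (N ⧸ P)).IsMaximal := by
  haveI : IsSimpleModule R (N ⧸ P) := isSimpleModule_iff_isCoatom.mpr hP
  exact IsSimpleModule.annihilator_isMaximal

theorem torsion_le_coatom {P : Submodule R N} (hP : IsCoatom P) {m' : Ideal R}
    (hm' : m'.IsMaximal) (hne : m' ≠ Module.annihilator R (N ⧸ P)) :
    torsionBySet R N (m' : Set R) ≤ P := by
  set m := Module.annihilator R (N ⧸ P) with hm
  have hmmax : m.IsMaximal := coatom_ann_isMaximal hP
  -- pick r ∈ m' \ m
  have hnle : ¬ m' ≤ m := fun hle => hne (hm'.eq_of_le hmmax.ne_top hle)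
  obtain ⟨r, hrm', hrm⟩ := SetLike.not_le_iff_exists.mp hnle
  obtain ⟨s, i, him, hsi⟩ := hmmax.exists_inv hrm
  intro x hx
  rw [mem_torsionBySet_iff] at hx
  have hrx : r • x = 0 := hx ⟨r, hrm'⟩
  -- show mk x = 0 in N ⧸ P
  rw [← Quotient.mk_eq_zero P]
  have h1 : (s * r + i) • Submodule.Quotient.mk (p := P) x
      = Submodule.Quotient.mk (p := P) x := by rw [hsi, one_smul]
  rw [add_smul, mul_smul] at h1
  have h2 : r • Submodule.Quotient.mk (p := P) x = 0 := by
    rw [← Submodule.Quotient.mk_smul, hrx, Submodule.Quotient.mk_zero]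
  have h3 : i • Submodule.Quotient.mk (p := P) x = 0 :=
    Module.mem_annihilator.mp him _
  rw [h2, smul_zero, h3, add_zero] at h1
  exact h1.symm

theorem iSup_torsion_eq_top [IsSemisimpleModule R N] :
    (⨆ m : MaximalSpectrum R, torsionBySet R N (m.asIdeal : Set R)) = ⊤ := by
  refine top_unique ?_
  rw [← IsSemisimpleModule.sSup_simples_eq_top (R := R) (M := N)]
  refine sSup_le fun T hT => ?_
  haveI : IsSimpleModule R T := hT
  have hmax : (Module.annihilator R T).IsMaximal := IsSimpleModule.annihilator_isMaximal
  refine le_iSup_of_le ⟨Module.annihilator R T, hmax⟩ fun x hx => ?_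
  rw [mem_torsionBySet_iff]
  rintro ⟨r, hr⟩
  have := Module.mem_annihilator.mp hr (⟨x, hx⟩ : T)
  exact congrArg Subtype.val this

theorem torsion_ne_bot_of_coatom [IsSemisimpleModule R N] {P : Submodule R N}
    (hP : IsCoatom P) :
    torsionBySet R N ((Module.annihilator R (N ⧸ P) : Ideal R) : Set R) ≠ ⊥ := by
  obtain ⟨C, hC⟩ := exists_isCompl P
  have hCbot : C ≠ ⊥ := by
    rintro rfl
    exact hP.1 (by simpa using hC.sup_eq_top)
  have hle : C ≤ torsionBySet R N ((Module.annihilator R (N ⧸ P) : Ideal R) : Set R) := by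
    intro x hx
    rw [mem_torsionBySet_iff]
    rintro ⟨r, hr⟩
    have h1 : r • x ∈ P := by
      rw [← Quotient.mk_eq_zero P, Submodule.Quotient.mk_smul]
      exact Module.mem_annihilator.mp hr _
    have h2 : r • x ∈ C := C.smul_mem r hx
    have : r • x ∈ P ⊓ C := ⟨h1, h2⟩
    rwa [hC.inf_eq_bot] at this
  intro h
  exact hCbot (le_bot_iff.mp (h ▸ hle))

theorem torsion_inf_smul [IsSemisimpleModule R N] (m : Ideal R) :
    torsionBySet R N (m : Set R) ⊓ (m • ⊤ : Submodule R N) = ⊥ := by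
  set T := torsionBySet R N (m : Set R) with hT
  obtain ⟨C, hC⟩ := exists_isCompl T
  have h1 : (m • ⊤ : Submodule R N) ≤ C := by
    rw [← hC.sup_eq_top, smul_sup]
    refine sup_le ?_ Submodule.smul_le_right
    refine le_trans (smul_le.mpr fun r hr n hn => ?_) bot_le
    rw [mem_torsionBySet_iff] at hn
    exact (hn ⟨r, hr⟩ : r • n = 0) ▸ (⊥ : Submodule R N).zero_mem
  refine le_bot_iff.mp ?_
  calc T ⊓ (m • ⊤ : Submodule R N) ≤ T ⊓ C := inf_le_inf_left T h1
    _ = ⊥ := hC.inf_eq_bot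

theorem rank_torsion_le_rank_quot [IsSemisimpleModule R N] (m : Ideal R) :
    Module.rank (R ⧸ m) (torsionBySet R N (m : Set R))
      ≤ Module.rank (R ⧸ m) (N ⧸ (m • ⊤ : Submodule R N)) := by
  set T := torsionBySet R N (m : Set R) with hT
  set φR : T →ₗ[R] N ⧸ (m • ⊤ : Submodule R N) :=
    (m • ⊤ : Submodule R N).mkQ.comp T.subtype with hφ
  have hinj : Function.Injective φR := by
    intro x y hxy
    have : (x : N) - (y : N) ∈ (m • ⊤ : Submodule R N) := by
      rw [← Quotient.mk_eq_zero (m • ⊤ : Submodule R N)]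
      simp only [Submodule.Quotient.mk_sub]
      have : Submodule.Quotient.mk (p := (m • ⊤ : Submodule R N)) (x : N)
          = Submodule.Quotient.mk (p := (m • ⊤ : Submodule R N)) (y : N) := hxy
      rw [this, sub_self]
    have hmem : (x : N) - (y : N) ∈ T ⊓ (m • ⊤ : Submodule R N) :=
      ⟨T.sub_mem x.2 y.2, this⟩
    rw [torsion_inf_smul, Submodule.mem_bot, sub_eq_zero] at hmem
    exact Subtype.ext hmem
  have hsurj : Function.Surjective (algebraMap R (R ⧸ m)) := by
    rw [Ideal.Quotient.algebraMap_eq]; exact Ideal.Quotient.mk_surjective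
  set φ := φR.extendScalarsOfSurjective hsurj with hφ'
  have hinj' : Function.Injective φ := fun x y h => hinj h
  exact LinearMap.rank_le_of_injective φ hinj'

theorem rank_quot_le_of_surjective (f : M →ₗ[R] N) (hf : Function.Surjective f)
    (m : Ideal R) :
    Module.rank (R ⧸ m) (N ⧸ (m • ⊤ : Submodule R N))
      ≤ Module.rank (R ⧸ m) (M ⧸ (m • ⊤ : Submodule R M)) := by
  have hle : (m • ⊤ : Submodule R M) ≤ Submodule.comap f (m • ⊤ : Submodule R N) := by
    intro x hx
    have : f x ∈ Submodule.map f (m • ⊤ : Submodule R M) := Submodule.mem_map_of_mem hx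
    rw [Submodule.map_smul''] at this
    exact Submodule.smul_mono le_rfl le_top this
  set ψR := Submodule.mapQ (m • ⊤ : Submodule R M) (m • ⊤ : Submodule R N) f hle with hψ
  have hsurjψ : Function.Surjective ψR := by
    intro z
    obtain ⟨y, rfl⟩ := Submodule.Quotient.mk_surjective _ z
    obtain ⟨x, rfl⟩ := hf y
    exact ⟨Submodule.Quotient.mk x, by rw [hψ, Submodule.mapQ_apply]⟩
  have hsurj : Function.Surjective (algebraMap R (R ⧸ m)) := by
    rw [Ideal.Quotient.algebraMap_eq]; exact Ideal.Quotient.mk_surjective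
  set ψ := ψR.extendScalarsOfSurjective hsurj with hψ'
  have : Function.Surjective ψ := fun z => hsurjψ z
  exact LinearMap.rank_le_of_surjective ψ this

theorem exists_finset_torsion [IsSemisimpleModule R N] [IsNoetherian R N] :
    ∃ G : Finset (MaximalSpectrum R),
      (⨆ m ∈ G, torsionBySet R N ((m : MaximalSpectrum R).asIdeal : Set R)) = ⊤ := by
  classical
  set T : MaximalSpectrum R → Submodule R N := fun m => torsionBySet R N (m.asIdeal : Set R)
  obtain ⟨t, hts, htsup⟩ :=
    (CompleteLattice.WellFoundedGT.isSupFiniteCompact (α := Submodule R N)) (Set.range T)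
  rw [sSup_range] at htsup
  have htop : t.sup id = ⊤ := by rw [← htsup]; exact iSup_torsion_eq_top
  refine ⟨t.attach.image (fun x => (hts x.2).choose), top_unique ?_⟩
  rw [← htop]
  refine Finset.sup_le fun x hx => ?_
  have hspec : T ((hts hx).choose) = x := (hts hx).choose_spec
  refine le_trans (le_of_eq ?_) (le_iSup₂ (f := fun m _ => T m) ((hts hx).choose) ?_)
  · exact hspec.symm
  · exact Finset.mem_image.mpr ⟨⟨x, hx⟩, Finset.mem_attach _ _, rfl⟩

def torsionSub {m : Ideal R} (p : Submodule R (torsionBySet R N (m : Set R))) :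
    Submodule (R ⧸ m) (torsionBySet R N (m : Set R)) where
  carrier := p
  add_mem' := p.add_mem
  zero_mem' := p.zero_mem
  smul_mem' := by
    intro c x hx
    obtain ⟨r, rfl⟩ := Ideal.Quotient.mk_surjective c
    show (Ideal.Quotient.mk m r) • x ∈ p
    rw [Submodule.torsionBySet.mk_smul]
    exact p.smul_mem r hx

theorem mem_torsionSub {m : Ideal R} {p : Submodule R (torsionBySet R N (m : Set R))}
    {x} : x ∈ torsionSub p ↔ x ∈ p := Iff.rfl

theorem torsionSub_eq_top {m : Ideal R} {p : Submodule R (torsionBySet R N (m : Set R))}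
    (h : torsionSub p = ⊤) : p = ⊤ := by
  rw [Submodule.eq_top_iff']
  intro x
  exact mem_torsionSub.mp (h ▸ Submodule.mem_top)

theorem torsionSub_injective (m : Ideal R) :
    Function.Injective (torsionSub (N := N) (m := m)) := by
  intro p q h
  ext x
  constructor
  · intro hx
    exact mem_torsionSub.mp (h ▸ (mem_torsionSub.mpr hx : x ∈ torsionSub p))
  · intro hx
    exact mem_torsionSub.mp (h.symm ▸ (mem_torsionSub.mpr hx : x ∈ torsionSub q))

set_option maxHeartbeats 1000000 in
theorem cover_of_rank_two {m : Ideal R} (hm : m.IsMaximal)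
    (h2 : (2 : Cardinal) ≤ Module.rank (R ⧸ m) (M ⧸ (m • ⊤ : Submodule R M))) :
    ∃ S : Set (Submodule R M), (∀ W ∈ S, W ≠ ⊤) ∧ (⋃ W ∈ S, (W : Set M)) = Set.univ ∧
      #S = #(R ⧸ m) + 1 := by
  haveI := hm
  set k := R ⧸ m
  set V := M ⧸ (m • ⊤ : Submodule R M)
  obtain ⟨f, hf⟩ := exists_linearIndependent_of_le_rank (R := k) (M := V) (n := 2)
    (by exact_mod_cast h2)
  set x := f 0 with hx
  set y := f 1 with hy
  have haux : ∀ a b : k, a • x + b • y = 0 → a = 0 ∧ b = 0 := by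
    intro a b hab
    have := Fintype.linearIndependent_iff.mp hf ![a, b] ?_
    · exact ⟨this 0, this 1⟩
    · rw [Fin.sum_univ_two]; simpa using hab
  obtain ⟨W, hW⟩ := Submodule.exists_isCompl (Submodule.span k {x} ⊔ Submodule.span k {y})
  set U := Submodule.span k {x} ⊔ Submodule.span k {y} with hU
  have hxU : x ∈ U := le_sup_left (α := Submodule k V) (Submodule.mem_span_singleton_self x)
  have hyU : y ∈ U := le_sup_right (α := Submodule k V) (Submodule.mem_span_singleton_self y)
  set L : Option k → Submodule k V :=
    fun o => Option.rec (Submodule.span k {y} ⊔ W) (fun t => Submodule.span k {x + t • y} ⊔ W) o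
    with hL
  -- decomposition claims
  have claimA : ∀ (t α β : k), α • x + β • y ∈ L (some t) → β = α * t := by
    intro t α β h
    obtain ⟨u, hu, w, hw, huw⟩ := Submodule.mem_sup.mp h
    obtain ⟨c, rfl⟩ := Submodule.mem_span_singleton.mp hu
    have hwU : w ∈ U := by
      have hwe : w = (α - c) • x + (β - c * t) • y := by
        have : w = α • x + β • y - c • (x + t • y) := by rw [← huw]; abel
        rw [this, smul_add, smul_smul, sub_smul, sub_smul]; abel
      rw [hwe]
      exact U.add_mem (U.smul_mem _ hxU) (U.smul_mem _ hyU)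
    have : w ∈ U ⊓ W := ⟨hwU, hw⟩
    rw [hW.inf_eq_bot, Submodule.mem_bot] at this
    have hz : (α - c) • x + (β - c * t) • y = 0 := by
      have hwe : w = (α - c) • x + (β - c * t) • y := by
        have : w = α • x + β • y - c • (x + t • y) := by rw [← huw]; abel
        rw [this, smul_add, smul_smul, sub_smul, sub_smul]; abel
      rw [← hwe, this]
    obtain ⟨h1, h2'⟩ := haux _ _ hz
    have hac : α = c := by rwa [sub_eq_zero] at h1
    rw [sub_eq_zero] at h2'
    rw [h2', hac]
  have claimB : ∀ (α β : k), α • x + β • y ∈ L none → α = 0 := by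
    intro α β h
    obtain ⟨u, hu, w, hw, huw⟩ := Submodule.mem_sup.mp h
    obtain ⟨c, rfl⟩ := Submodule.mem_span_singleton.mp hu
    have hwe : w = α • x + (β - c) • y := by
      have : w = α • x + β • y - c • y := by rw [← huw]; abel
      rw [this, sub_smul]; abel
    have hwU : w ∈ U := by
      rw [hwe]; exact U.add_mem (U.smul_mem _ hxU) (U.smul_mem _ hyU)
    have : w ∈ U ⊓ W := ⟨hwU, hw⟩
    rw [hW.inf_eq_bot, Submodule.mem_bot] at this
    have hz : α • x + (β - c) • y = 0 := by rw [← hwe, this]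
    exact (haux _ _ hz).1
  have hprop : ∀ o, L o ≠ ⊤ := by
    rintro (_ | t) htop
    · have : x ∈ L none := htop ▸ Submodule.mem_top
      have := claimB 1 0 (by simpa using this)
      exact one_ne_zero this
    · have : y ∈ L (some t) := htop ▸ Submodule.mem_top
      have := claimA t 0 1 (by simpa using this)
      simp at this
  have hLcov : ∀ v : V, ∃ o, v ∈ L o := by
    intro v
    have : v ∈ U ⊔ W := by rw [hW.sup_eq_top]; exact Submodule.mem_top
    obtain ⟨u, hu, w, hw, rfl⟩ := Submodule.mem_sup.mp this
    obtain ⟨u1, hu1, u2, hu2, rfl⟩ := Submodule.mem_sup.mp hu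
    obtain ⟨a, rfl⟩ := Submodule.mem_span_singleton.mp hu1
    obtain ⟨b, rfl⟩ := Submodule.mem_span_singleton.mp hu2
    by_cases ha : a = 0
    · refine ⟨none, Submodule.mem_sup.mpr ⟨b • y, Submodule.smul_mem _ _
        (Submodule.mem_span_singleton_self y), w, hw, by rw [ha, zero_smul, zero_add]⟩⟩
    · refine ⟨some (a⁻¹ * b), Submodule.mem_sup.mpr ⟨a • x + b • y, ?_, w, hw, rfl⟩⟩
      refine Submodule.mem_span_singleton.mpr ⟨a, ?_⟩
      rw [smul_add, smul_smul, ← mul_assoc, mul_inv_cancel₀ ha, one_mul]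
  have hLinj : Function.Injective L := by
    rintro (_ | t) (_ | s) h
    · rfl
    · exfalso
      have hyn : y ∈ L none := Submodule.mem_sup.mpr
        ⟨y, Submodule.mem_span_singleton_self y, 0, W.zero_mem, add_zero y⟩
      have : y ∈ L (some s) := h ▸ hyn
      have := claimA s 0 1 (by simpa using this)
      simp at this
    · exfalso
      have hyn : y ∈ L none := Submodule.mem_sup.mpr
        ⟨y, Submodule.mem_span_singleton_self y, 0, W.zero_mem, add_zero y⟩
      have : y ∈ L (some t) := h.symm ▸ hyn
      have := claimA t 0 1 (by simpa using this)
      simp at this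
    · have hxt : x + t • y ∈ L (some t) := Submodule.mem_sup.mpr
        ⟨x + t • y, Submodule.mem_span_singleton_self _, 0, W.zero_mem, add_zero _⟩
      have : x + t • y ∈ L (some s) := h ▸ hxt
      have := claimA s 1 t (by simpa using this)
      rw [one_mul] at this
      rw [this]
  -- pull back to M
  set π := (m • ⊤ : Submodule R M).mkQ with hπ
  have hπsurj : Function.Surjective π := Submodule.mkQ_surjective _
  set F : Option k → Submodule R M :=
    fun o => Submodule.comap π (Submodule.restrictScalars R (L o)) with hF
  have hFinj : Function.Injective F := by
    intro o o' h
    apply hLinj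
    apply Submodule.restrictScalars_injective R
    exact Submodule.comap_injective_of_surjective hπsurj h
  refine ⟨Set.range F, ?_, ?_, ?_⟩
  · rintro N ⟨o, rfl⟩ htop
    refine hprop o (Submodule.eq_top_iff'.mpr fun v => ?_)
    obtain ⟨z, rfl⟩ := hπsurj v
    have : z ∈ F o := htop ▸ Submodule.mem_top
    exact this
  · refine Set.eq_univ_of_forall fun z => ?_
    obtain ⟨o, ho⟩ := hLcov (π z)
    exact Set.mem_iUnion₂.mpr ⟨F o, ⟨o, rfl⟩, ho⟩
  · rw [mk_range_eq _ hFinj, mk_option]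

theorem lower_core [IsSemisimpleModule R N] [IsNoetherian R N]
    (S : Set (Submodule R N)) (hprop : ∀ W ∈ S, W ≠ ⊤)
    (hcov : ∀ v : N, ∃ W ∈ S, v ∈ W) :
    ∃ m : Ideal R, m.IsMaximal ∧
      (2 : Cardinal) ≤ Module.rank (R ⧸ m) (torsionBySet R N (m : Set R)) ∧
      #(R ⧸ m) + 1 ≤ #S := by
  classical
  haveI : IsCoatomic (Submodule R N) :=
    isCoatomic_of_orderTop_gt_wellFounded (IsWellFounded.wf (r := (· > ·)))
  -- replace each member of the cover by a coatom above it
  have hch : ∀ W : S, ∃ P : Submodule R N, IsCoatom P ∧ (W : Submodule R N) ≤ P := by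
    rintro ⟨W, hW⟩
    rcases eq_top_or_exists_le_coatom W with h | ⟨P, hP, hWP⟩
    · exact absurd h (hprop _ hW)
    · exact ⟨P, hP, hWP⟩
  choose c hc1 hc2 using hch
  set U : Set (Submodule R N) := Set.range c with hU
  have hUco : ∀ P ∈ U, IsCoatom P := by rintro P ⟨W, rfl⟩; exact hc1 W
  have hUcov : ∀ v : N, ∃ P ∈ U, v ∈ P := by
    intro v
    obtain ⟨W, hW, hv⟩ := hcov v
    exact ⟨c ⟨W, hW⟩, ⟨⟨W, hW⟩, rfl⟩, hc2 ⟨W, hW⟩ hv⟩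
  obtain ⟨G, hG⟩ := exists_finset_torsion (R := R) (N := N)
  -- the annihilator of any coatom in the cover appears in G
  have hGmem : ∀ (P : Submodule R N) (hP : IsCoatom P),
      (⟨Module.annihilator R (N ⧸ P), coatom_ann_isMaximal hP⟩ : MaximalSpectrum R) ∈ G := by
    intro P hP
    by_contra hnot
    have hle : ∀ m' ∈ G, torsionBySet R N ((m' : MaximalSpectrum R).asIdeal : Set R) ≤ P := by
      intro m' hm'
      refine torsion_le_coatom hP m'.isMaximal fun he => hnot ?_
      have : m' = ⟨Module.annihilator R (N ⧸ P), coatom_ann_isMaximal hP⟩ :=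
        MaximalSpectrum.ext he
      rwa [← this]
    have : (⊤ : Submodule R N) ≤ P := by
      rw [← hG]
      exact iSup₂_le hle
    exact hP.1 (top_le_iff.mp this)
  -- key: some isotypic component is covered by its own coatoms
  by_cases hkey : ∃ m : MaximalSpectrum R,
      ∀ v ∈ torsionBySet R N (m.asIdeal : Set R), ∃ P,
        (IsCoatom P ∧ P ∈ U ∧ Module.annihilator R (N ⧸ P) = m.asIdeal) ∧ v ∈ P
  · obtain ⟨m, hm⟩ := hkey
    haveI := m.isMaximal
    set mI := m.asIdeal with hmI
    set T := torsionBySet R N (mI : Set R) with hT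
    set UP : Set (Submodule R N) :=
      {P | IsCoatom P ∧ P ∈ U ∧ Module.annihilator R (N ⧸ P) = mI} with hUP
    set Svs : Set (Submodule (R ⧸ mI) (torsionBySet R N (mI : Set R))) :=
      (fun P => torsionSub (Submodule.comap T.subtype P)) '' UP with hSvs
    have hTle : ∀ P ∈ UP, ¬ T ≤ P := by
      rintro P ⟨hPco, hPU, hPann⟩ hle
      have : (⊤ : Submodule R N) ≤ P := by
        rw [← hG]
        refine iSup₂_le fun m' hm' => ?_
        by_cases he : m' = m
        · subst he; exact hle
        · refine torsion_le_coatom hPco m'.isMaximal fun hee => he ?_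
          rw [hPann] at hee
          exact MaximalSpectrum.ext hee
      exact hPco.1 (top_le_iff.mp this)
    have hpropvs : ∀ W ∈ Svs, W ≠ ⊤ := by
      rintro _ ⟨P, hPUP, rfl⟩ htop
      refine hTle P hPUP fun t ht => ?_
      have := torsionSub_eq_top htop
      have h2 : (⟨t, ht⟩ : T) ∈ Submodule.comap T.subtype P := this ▸ Submodule.mem_top
      exact h2
    have hcovvs : ∀ v : torsionBySet R N (mI : Set R), ∃ W ∈ Svs, v ∈ W := by
      intro v
      obtain ⟨P, hPc, hvP⟩ := hm v.1 v.2
      exact ⟨torsionSub (Submodule.comap T.subtype P), ⟨P, hPc, rfl⟩,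
        mem_torsionSub.mpr hvP⟩
    haveI : IsNoetherian R (torsionBySet R N (mI : Set R)) := inferInstance
    haveI : IsNoetherian (R ⧸ mI) (torsionBySet R N (mI : Set R)) :=
      isNoetherian_of_tower R inferInstance
    haveI : FiniteDimensional (R ⧸ mI) (torsionBySet R N (mI : Set R)) :=
      IsNoetherian.iff_fg.mp inferInstance
    have hcard := vs_card (Module.finrank (R ⧸ mI) (torsionBySet R N (mI : Set R))) rfl
      Svs hpropvs (fun v => hcovvs v)
    obtain ⟨a, b, hab⟩ := vs_pair Svs hpropvs (fun v => hcovvs v)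
    refine ⟨mI, m.isMaximal, ?_, ?_⟩
    · have := hab.cardinal_lift_le_rank
      simpa using this
    · refine hcard.trans ?_
      calc #Svs ≤ #UP := mk_image_le
        _ ≤ #U := mk_le_mk_of_subset fun P hP => hP.2.1
        _ ≤ #S := mk_range_le
  · exfalso
    push_neg at hkey
    choose vm hvm1 hvm2 using hkey
    set v : N := ∑ m ∈ G, vm m with hv
    obtain ⟨W, hWS, hvW⟩ := hcov v
    set P₀ := c ⟨W, hWS⟩ with hP₀
    have hP₀co : IsCoatom P₀ := hc1 _
    have hvP₀ : v ∈ P₀ := hc2 _ hvW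
    set m₀ : MaximalSpectrum R :=
      ⟨Module.annihilator R (N ⧸ P₀), coatom_ann_isMaximal hP₀co⟩ with hm₀
    have hm₀G : m₀ ∈ G := hGmem P₀ hP₀co
    have hsub : ∀ m' ∈ G.erase m₀, vm m' ∈ P₀ := by
      intro m' hm'
      have hne : m' ≠ m₀ := Finset.ne_of_mem_erase hm'
      refine torsion_le_coatom hP₀co m'.isMaximal (fun he => hne ?_) (hvm1 m')
      exact MaximalSpectrum.ext he
    have hvm₀ : vm m₀ ∈ P₀ := by
      have hsum : vm m₀ + ∑ m' ∈ G.erase m₀, vm m' = v := Finset.add_sum_erase G vm hm₀G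
      have : vm m₀ = v - ∑ m' ∈ G.erase m₀, vm m' := by rw [← hsum]; abel
      rw [this]
      exact P₀.sub_mem hvP₀ (Submodule.sum_mem _ hsub)
    exact hvm2 m₀ P₀ ⟨hP₀co, ⟨⟨W, hWS⟩, rfl⟩, rfl⟩ hvm₀

theorem ann_mem_of_iSup_eq_top {G : Finset (MaximalSpectrum R)}
    (hG : (⨆ m ∈ G, torsionBySet R N ((m : MaximalSpectrum R).asIdeal : Set R)) = ⊤)
    {P : Submodule R N} (hP : IsCoatom P) :
    (⟨Module.annihilator R (N ⧸ P), coatom_ann_isMaximal hP⟩ : MaximalSpectrum R) ∈ G := by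
  by_contra hnot
  have hle : ∀ m' ∈ G, torsionBySet R N ((m' : MaximalSpectrum R).asIdeal : Set R) ≤ P := by
    intro m' hm'
    refine torsion_le_coatom hP m'.isMaximal fun he => hnot ?_
    have : m' = ⟨Module.annihilator R (N ⧸ P), coatom_ann_isMaximal hP⟩ :=
      MaximalSpectrum.ext he
    rwa [← this]
  have : (⊤ : Submodule R N) ≤ P := by rw [← hG]; exact iSup₂_le hle
  exact hP.1 (top_le_iff.mp this)

theorem cyclic_core [IsSemisimpleModule R N] [IsNoetherian R N]
    (hr : ∀ m : MaximalSpectrum R,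
      Module.rank (R ⧸ m.asIdeal) (torsionBySet R N (m.asIdeal : Set R)) < 2) :
    ∃ x : N, Submodule.span R {x} = ⊤ := by
  classical
  haveI : IsCoatomic (Submodule R N) :=
    isCoatomic_of_orderTop_gt_wellFounded (IsWellFounded.wf (r := (· > ·)))
  obtain ⟨G, hG⟩ := exists_finset_torsion (R := R) (N := N)
  have hchoice : ∀ m : MaximalSpectrum R, ∃ x : N,
      x ∈ torsionBySet R N (m.asIdeal : Set R) ∧
      (torsionBySet R N (m.asIdeal : Set R) ≠ ⊥ → x ≠ 0) := by
    intro m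
    by_cases h : torsionBySet R N (m.asIdeal : Set R) = ⊥
    · exact ⟨0, Submodule.zero_mem _, fun hne => absurd h hne⟩
    · obtain ⟨x, hx, hx0⟩ := Submodule.exists_mem_ne_zero_of_ne_bot h
      exact ⟨x, hx, fun _ => hx0⟩
  choose vm hvm1 hvm0 using hchoice
  set v : N := ∑ m ∈ G, vm m with hv
  have hnocoatom : ∀ P : Submodule R N, IsCoatom P → v ∉ P := by
    intro P hP hvP
    set m₀ : MaximalSpectrum R :=
      ⟨Module.annihilator R (N ⧸ P), coatom_ann_isMaximal hP⟩ with hm₀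
    have hm₀G : m₀ ∈ G := ann_mem_of_iSup_eq_top hG hP
    have hT₀ : torsionBySet R N (m₀.asIdeal : Set R) ≠ ⊥ := torsion_ne_bot_of_coatom hP
    have hsub : ∀ m' ∈ G.erase m₀, vm m' ∈ P := by
      intro m' hm'
      have hne : m' ≠ m₀ := Finset.ne_of_mem_erase hm'
      refine torsion_le_coatom hP m'.isMaximal (fun he => hne (MaximalSpectrum.ext he))
        (hvm1 m')
    have hvm₀P : vm m₀ ∈ P := by
      have hsum : vm m₀ + ∑ m' ∈ G.erase m₀, vm m' = v := Finset.add_sum_erase G vm hm₀G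
      have : vm m₀ = v - ∑ m' ∈ G.erase m₀, vm m' := by rw [← hsum]; abel
      rw [this]
      exact P.sub_mem hvP (Submodule.sum_mem _ hsub)
    -- the whole isotypic component is inside P
    have hTP : torsionBySet R N (m₀.asIdeal : Set R) ≤ P := by
      intro x hx
      haveI := m₀.isMaximal
      set y' : torsionBySet R N (m₀.asIdeal : Set R) := ⟨vm m₀, hvm1 m₀⟩ with hy'
      set x' : torsionBySet R N (m₀.asIdeal : Set R) := ⟨x, hx⟩ with hx'
      have hy'0 : y' ≠ 0 := fun h => (hvm0 m₀ hT₀) (congrArg Subtype.val h)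
      by_cases hc : ∃ c : R ⧸ m₀.asIdeal, c • y' = x'
      · obtain ⟨c, hc⟩ := hc
        obtain ⟨r, rfl⟩ := Ideal.Quotient.mk_surjective c
        have : r • vm m₀ = x := by
          have := congrArg Subtype.val hc
          rwa [Submodule.torsionBySet.mk_smul] at this
        rw [← this]
        exact P.smul_mem r hvm₀P
      · exfalso
        push_neg at hc
        have hli : LinearIndependent (R ⧸ m₀.asIdeal) ![x', y'] := by
          rw [linearIndependent_fin2]
          refine ⟨by simpa using hy'0, fun a ha => hc a ?_⟩
          simpa using ha
        have := hli.cardinal_lift_le_rank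
        have h2 : (2 : Cardinal) ≤
            Module.rank (R ⧸ m₀.asIdeal) (torsionBySet R N (m₀.asIdeal : Set R)) := by
          simpa using this
        exact absurd h2 (not_le.mpr (hr m₀))
    have : (⊤ : Submodule R N) ≤ P := by
      rw [← hG]
      refine iSup₂_le fun m' hm' => ?_
      by_cases he : m' = m₀
      · subst he; exact hTP
      · exact torsion_le_coatom hP m'.isMaximal
          (fun hee => he (MaximalSpectrum.ext hee))
    exact hP.1 (top_le_iff.mp this)
  rcases eq_top_or_exists_le_coatom (Submodule.span R {v}) with h | ⟨P, hP, hle⟩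
  · exact ⟨v, h⟩
  · exact absurd (hle (Submodule.mem_span_singleton_self v)) (hnocoatom P hP)

end

end AuxCover

set_option maxHeartbeats 1000000 in
/-- Let `M` be an `R`-module with small Jacobson radical and finite dual Goldie dimension
(i.e. `M/Jac(M)` is finite-length semisimple) over a commutative unital ring `R`. If
`S_M` is nonempty then `σ(M,R) = min_{m ∈ S_M} |R/m| + 1`; if `S_M` is empty and `M` is
finitely generated, then `M` is cyclic. -/
theorem stmt13 (R M : Type u) [CommRing R] [AddCommGroup M] [Module R M]
    (hsmall : IsSmallSubmodule (moduleJacobson R M))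
    (hss : IsSemisimpleModule R (M ⧸ moduleJacobson R M))
    (hfl : IsFiniteLength R (M ⧸ moduleJacobson R M)) :
    ((SMax R M).Nonempty →
      coveringNumber R M = ⨅ m : SMax R M, (#(R ⧸ (m : MaximalSpectrum R).asIdeal) + 1)) ∧
    (SMax R M = ∅ → Module.Finite R M → ∃ x : M, Submodule.span R {x} = ⊤) := by
  classical
  set J := moduleJacobson R M with hJ
  haveI hssQ : IsSemisimpleModule R (M ⧸ J) := hss
  obtain ⟨hnoe, hart⟩ := isFiniteLength_iff_isNoetherian_isArtinian.mp hfl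
  haveI := hnoe
  have hmkQsurj : Function.Surjective J.mkQ := Submodule.mkQ_surjective J
  have glue : ∀ m : Ideal R, m.IsMaximal →
      ((2 : Cardinal) ≤ Module.rank (R ⧸ m) (Submodule.torsionBySet R (M ⧸ J) (m : Set R))) →
      (2 : Cardinal) ≤ Module.rank (R ⧸ m) (M ⧸ (m • ⊤ : Submodule R M)) := by
    intro m hm h2
    exact h2.trans ((rank_torsion_le_rank_quot m).trans
      (rank_quot_le_of_surjective J.mkQ hmkQsurj m))
  have transfer : ∀ S : Set (Submodule R M), (∀ W ∈ S, W ≠ ⊤) →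
      (⋃ W ∈ S, (W : Set M)) = Set.univ →
      ∃ m : Ideal R, m.IsMaximal ∧
        ((2 : Cardinal) ≤ Module.rank (R ⧸ m) (M ⧸ (m • ⊤ : Submodule R M))) ∧
        #(R ⧸ m) + 1 ≤ #S := by
    intro S hSprop hScov
    set S' := (Submodule.map J.mkQ) '' S with hS'
    have hprop' : ∀ W ∈ S', W ≠ ⊤ := by
      rintro _ ⟨W, hW, rfl⟩ htop
      rw [Submodule.map_mkQ_eq_top] at htop
      exact hSprop W hW (hsmall W htop)
    have hcov' : ∀ q : M ⧸ J, ∃ W ∈ S', q ∈ W := by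
      intro q
      obtain ⟨x, rfl⟩ := hmkQsurj q
      have hx : x ∈ ⋃ W ∈ S, (W : Set M) := hScov ▸ Set.mem_univ x
      obtain ⟨W, hW, hxW⟩ := Set.mem_iUnion₂.mp hx
      exact ⟨Submodule.map J.mkQ W, ⟨W, hW, rfl⟩, Submodule.mem_map_of_mem hxW⟩
    obtain ⟨m, hmax, h2, hcard⟩ := lower_core S' hprop' hcov'
    exact ⟨m, hmax, glue m hmax h2, hcard.trans mk_image_le⟩
  constructor
  · intro hne
    haveI : Nonempty ↥(SMax R M) := hne.to_subtype
    have hub : ∀ m : ↥(SMax R M),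
        coveringNumber R M ≤ #(R ⧸ (m : MaximalSpectrum R).asIdeal) + 1 := by
      intro m
      obtain ⟨S, h1, h2, h3⟩ :=
        cover_of_rank_two (M := M) (m := (m : MaximalSpectrum R).asIdeal)
          (m : MaximalSpectrum R).isMaximal m.2
      exact csInf_le' ⟨S, h1, h2, h3⟩
    refine le_antisymm (le_ciInf hub) (le_csInf ?_ ?_)
    · obtain ⟨m, hm⟩ := hne
      obtain ⟨S, h1, h2, h3⟩ := cover_of_rank_two (m := m.asIdeal) m.isMaximal hm
      exact ⟨#(R ⧸ m.asIdeal) + 1, S, h1, h2, h3⟩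
    · rintro c ⟨S, h1, h2, h3⟩
      obtain ⟨m, hmax, h2', hcard⟩ := transfer S h1 h2
      have hmem : (⟨m, hmax⟩ : MaximalSpectrum R) ∈ SMax R M := h2'
      refine le_trans (ciInf_le' _ (⟨⟨m, hmax⟩, hmem⟩ : ↥(SMax R M))) ?_
      rw [← h3]
      exact hcard
  · intro hempty _
    have hr : ∀ m : MaximalSpectrum R,
        Module.rank (R ⧸ m.asIdeal) (Submodule.torsionBySet R (M ⧸ J) (m.asIdeal : Set R)) < 2 := by
      intro m
      by_contra hge
      rw [not_lt] at hge
      have : m ∈ SMax R M := glue m.asIdeal m.isMaximal hge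
      rw [hempty] at this
      exact this
    obtain ⟨xq, hxq⟩ := cyclic_core hr
    obtain ⟨x, rfl⟩ := hmkQsurj xq
    refine ⟨x, hsmall _ ?_⟩
    rw [← Submodule.map_mkQ_eq_top, Submodule.map_span, Set.image_singleton]
    exact hxq
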